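/- Let C ⊆ [q]^n be a code with |C| ≥ r, r ≥ 3, and suppose there is a vector x ∈ C and a partition [n] = T₁ ∪ ... ∪ T_{r-1} into nonempty pairwise disjoint sets such that for each i ∈ [r-1], the subsequence x restricted to [n] \ T_i equals the corresponding subsequence of some codeword in C other than x. Then C contains an r-focal code with focus x. -/
import Mathlib

open Finset

/-- Observation (i) for codes: a partition of coordinates into non-own complements
yields an r-focal code with focus x. -/
theorem partition_nonown_gives_focal_code {n q r : ℕ} (hr : 3 ≤ r)
    (C : Finset (Fin n → Fin q)) (hC : r ≤ C.card)
    (x : Fin n → Fin q) (hx : x ∈ C)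
    (T : Fin (r - 1) → Finset (Fin n)) (hne : ∀ i, (T i).Nonempty)
    (hdisj : ∀ i j, i ≠ j → Disjoint (T i) (T j))
    (hcover : Finset.univ.biUnion T = Finset.univ)
    (hnonown : ∀ i, ∃ y ∈ C, y ≠ x ∧ ∀ j ∉ T i, y j = x j) :
    ∃ y : Fin (r - 1) → (Fin n → Fin q), Function.Injective y ∧
      (∀ j, y j ∈ C ∧ y j ≠ x) ∧
      ∀ i : Fin n,
        r - 2 ≤ (Finset.univ.filter fun j : Fin (r - 1) => y j i = x i).card := by
  choose y hyC hyx hyagree using hnonown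
  refine ⟨y, ?_, fun j => ⟨hyC j, hyx j⟩, ?_⟩
  · intro a b hab
    by_contra hne'
    apply hyx a
    funext k
    by_cases hk : k ∈ T a
    · have hk' : k ∉ T b := Finset.disjoint_left.mp (hdisj a b hne') hk
      calc y a k = y b k := by rw [hab]
        _ = x k := hyagree b k hk'
    · exact hyagree a k hk
  · intro i
    have hi : i ∈ Finset.univ.biUnion T := by rw [hcover]; exact mem_univ i
    obtain ⟨j₀, -, hj₀⟩ := mem_biUnion.mp hi
    have hsub : Finset.univ.erase j₀ ⊆ Finset.univ.filter (fun j => y j i = x i) := by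
      intro j hj
      simp only [mem_filter, mem_univ, true_and]
      have hji : i ∉ T j := fun h =>
        Finset.disjoint_left.mp (hdisj j j₀ (mem_erase.mp hj).1) h hj₀
      exact hyagree j i hji
    have hcard := Finset.card_le_card hsub
    rw [Finset.card_erase_of_mem (mem_univ j₀), Finset.card_univ, Fintype.card_fin] at hcard
    omega
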